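/- Let G be a digraph and f a discrete Morse function on G such that the out-degree and in-degree of every zero-point of f are both 1. Let (G̃, f̃) be the full M-collapse of (G, f) (iterating one-step M-collapses until no triple (u,v,w) with f(v) = 0, u→v→w, and u→w remains). Then the retraction r: G → G̃ defined by r(v) = w if f(v) = 0 and (u,v,w) is a collapsed triple, r(v) = v otherwise, is a deformation retraction: r is a digraph map with r|_{G̃} = id and i∘r ≃ id_G, where i: G̃ → G is the inclusion and ≃ is digraph homotopy. -/

import Mathlib

/-- A digraph: a vertex set together with an irreflexive edge relation supported on the
vertex set (edges are ordered pairs off the diagonal). -/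
structure DiGraph (V : Type) where
  verts : Set V
  Edge : V → V → Prop
  edge_mem_left : ∀ u v, Edge u v → u ∈ verts
  edge_mem_right : ∀ u v, Edge u v → v ∈ verts
  edge_ne : ∀ u v, Edge u v → u ≠ v

variable {V : Type}

/-- An allowed elementary path: a nonempty list of vertices of `G` such that each
consecutive pair is a directed edge of `G`. -/
def IsAllowed (G : DiGraph V) (p : List V) : Prop :=
  p ≠ [] ∧ (∀ v ∈ p, v ∈ G.verts) ∧ p.Chain' G.Edge

/-- `Del p q` : `p` is obtained from `q` by deleting one vertex. -/
def Del (p q : List V) : Prop := ∃ i < q.length, p = q.eraseIdx i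

/-- Value of a function on vertices extended to a path: the sum over its vertices. -/
def fval (f : V → ℝ) (p : List V) : ℝ := (p.map f).sum

/-- A discrete Morse function on a digraph `G`: a nonnegative function on vertices such
that for every allowed elementary path `p` there is (i) at most one allowed elementary
path obtained from `p` by deleting one vertex with the same `f`-value, and (ii) at most
one allowed elementary path obtained from `p` by inserting one vertex with the same
`f`-value. -/
def IsMorse (G : DiGraph V) (f : V → ℝ) : Prop :=
  (∀ v, 0 ≤ f v) ∧
  ∀ p, IsAllowed G p →
    ((∀ β β', IsAllowed G β → Del β p → fval f β = fval f p →
        IsAllowed G β' → Del β' p → fval f β' = fval f p → β = β') ∧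
     (∀ α α', IsAllowed G α → Del p α → fval f α = fval f p →
        IsAllowed G α' → Del p α' → fval f α' = fval f p → α = α'))

/-- An allowed elementary path is critical if no allowed path obtained by deleting one
vertex has the same `f`-value, and no allowed path obtained by inserting one vertex has
the same `f`-value. -/
def IsCritical (G : DiGraph V) (f : V → ℝ) (p : List V) : Prop :=
  (¬ ∃ β, IsAllowed G β ∧ Del β p ∧ fval f β = fval f p) ∧
  (¬ ∃ α, IsAllowed G α ∧ Del p α ∧ fval f α = fval f p)

/-- A directed loop: an allowed elementary path `v₀ v₁ ⋯ vₙ v₀` with `n ≥ 1`. -/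
def IsLoop (G : DiGraph V) (p : List V) : Prop :=
  IsAllowed G p ∧ 3 ≤ p.length ∧ p.head? = p.getLast?

/-- A simplicial allowed elementary path: all vertices distinct. -/
def Simplicial (G : DiGraph V) (p : List V) : Prop := IsAllowed G p ∧ p.Nodup

/-- A pair of the combinatorial discrete gradient vector field `M(G,f)`:
`β` is obtained from `α` by inserting one vertex, and `f(α) = f(β)`. -/
def MPair (G : DiGraph V) (f : V → ℝ) (α β : List V) : Prop :=
  IsAllowed G α ∧ IsAllowed G β ∧ Del α β ∧ fval f α = fval f β

/-- `H` is a sub-digraph of `G`. -/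
def Subdigraph (H G : DiGraph V) : Prop :=
  H.verts ⊆ G.verts ∧ ∀ u v, H.Edge u v → G.Edge u v

/-- One-step `M`-collapse of a pair (digraph, discrete Morse function): a zero-point `v`
with unique in-neighbor `u` and unique out-neighbor `w` and with `u→w` an edge is
removed, together with the edges `u→v` and `v→w`; the function is unchanged. -/
def OneStepCollapse (P Q : DiGraph V × (V → ℝ)) : Prop :=
  ∃ u v w, P.2 v = 0 ∧ P.1.Edge u v ∧ P.1.Edge v w ∧
    (∀ x, P.1.Edge x v → x = u) ∧ (∀ x, P.1.Edge v x → x = w) ∧ P.1.Edge u w ∧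
    Q.1.verts = P.1.verts \ {v} ∧
    (∀ a b, Q.1.Edge a b ↔ P.1.Edge a b ∧ ¬(a = u ∧ b = v) ∧ ¬(a = v ∧ b = w)) ∧
    Q.2 = P.2

/-- The full `M`-collapse: iterate one-step `M`-collapses until no triple `(u,v,w)` with
`f(v) = 0`, `u→v→w` and `u→w` remains. -/
def FullCollapse (P Q : DiGraph V × (V → ℝ)) : Prop :=
  Relation.ReflTransGen OneStepCollapse P Q ∧
  ¬ ∃ u v w, Q.2 v = 0 ∧ Q.1.Edge u v ∧ Q.1.Edge v w ∧ Q.1.Edge u w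

/-- A digraph map from `G` to `H` (on the same ambient vertex type): vertices map to
vertices, and each directed edge `u→v` of `G` maps to either a single vertex
(`φ u = φ v`) or a directed edge of `H`. -/
def IsDMap (G H : DiGraph V) (φ : V → V) : Prop :=
  (∀ v ∈ G.verts, φ v ∈ H.verts) ∧
  ∀ u v, G.Edge u v → φ u = φ v ∨ H.Edge (φ u) (φ v)

/-- One-step homotopy between digraph maps `φ, ψ : G → H`, given by a digraph map
`F : G ⊡ I₁ → H` with `F|_{G⊡{0}} = φ` and `F|_{G⊡{1}} = ψ`, where `I₁` is the line
digraph `0 → 1`. -/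
def OneStepHtpy (G H : DiGraph V) (φ ψ : V → V) : Prop :=
  IsDMap G H φ ∧ IsDMap G H ψ ∧
  ∀ v ∈ G.verts, φ v = ψ v ∨ H.Edge (φ v) (ψ v)

/-- Homotopy of digraph maps `G → H`: the zigzag closure of one-step homotopies, which
corresponds to homotopies over arbitrary line digraphs `I_n`. -/
def Homotopic (G H : DiGraph V) : (V → V) → (V → V) → Prop :=
  Relation.ReflTransGen fun φ ψ => OneStepHtpy G H φ ψ ∨ OneStepHtpy G H ψ φ

lemma no_zero_edge {G : DiGraph V} {f : V → ℝ} (hf : IsMorse G f)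
    {a b : V} (hE : G.Edge a b) (ha : f a = 0) (hb : f b = 0) : False := by
  have haV := G.edge_mem_left a b hE
  have hbV := G.edge_mem_right a b hE
  have hp : IsAllowed G [a, b] := by
    refine ⟨by simp, ?_, ?_⟩
    · intro v hv; simp at hv; rcases hv with rfl | rfl <;> assumption
    · exact List.isChain_pair.mpr hE
  have h1 : IsAllowed G [b] :=
    ⟨by simp, by intro v hv; simp at hv; subst hv; exact hbV, List.isChain_singleton b⟩
  have h2 : IsAllowed G [a] :=
    ⟨by simp, by intro v hv; simp at hv; subst hv; exact haV, List.isChain_singleton a⟩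
  have d1 : Del [b] [a, b] := ⟨0, by simp, rfl⟩
  have d2 : Del [a] [a, b] := ⟨1, by simp, rfl⟩
  have key := (hf.2 [a, b] hp).1 [b] [a] h1 d1 (by simp [fval, ha, hb])
    h2 d2 (by simp [fval, ha, hb])
  simp at key
  exact G.edge_ne a b hE key.symm

lemma step_sub {P Q : DiGraph V × (V → ℝ)} (h : OneStepCollapse P Q) :
    Q.1.verts ⊆ P.1.verts ∧ (∀ a b, Q.1.Edge a b → P.1.Edge a b) ∧ Q.2 = P.2 := by
  obtain ⟨u, v, w, _, _, _, _, _, _, hverts, hedge, hfq⟩ := h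
  exact ⟨by rw [hverts]; exact Set.diff_subset, fun a b hab => ((hedge a b).1 hab).1, hfq⟩

lemma rtg_sub {P Q : DiGraph V × (V → ℝ)}
    (h : Relation.ReflTransGen OneStepCollapse P Q) :
    Q.1.verts ⊆ P.1.verts ∧ (∀ a b, Q.1.Edge a b → P.1.Edge a b) ∧ Q.2 = P.2 := by
  induction h with
  | refl => exact ⟨subset_rfl, fun _ _ h => h, rfl⟩
  | tail hbc hstep ih =>
    obtain ⟨h1, h2, h3⟩ := step_sub hstep
    exact ⟨h1.trans ih.1, fun a b hab => ih.2.1 a b (h2 a b hab), h3.trans ih.2.2⟩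

lemma rtg_edge_survive {P Q : DiGraph V × (V → ℝ)}
    (h : Relation.ReflTransGen OneStepCollapse P Q) {a b : V}
    (ha : a ∈ Q.1.verts) (hb : b ∈ Q.1.verts) (he : P.1.Edge a b) : Q.1.Edge a b := by
  induction h using Relation.ReflTransGen.head_induction_on with
  | refl => exact he
  | head hs ht ih =>
    obtain ⟨u, v, w, _, _, _, _, _, _, hverts, hedge, _⟩ := hs
    have hsub := (rtg_sub ht).1
    have ha' := hsub ha
    have hb' := hsub hb
    rw [hverts] at ha' hb'
    refine ih ((hedge a b).2 ⟨he, ?_, ?_⟩)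
    · rintro ⟨-, rfl⟩; exact hb'.2 rfl
    · rintro ⟨rfl, -⟩; exact ha'.2 rfl

lemma find_step {P Q : DiGraph V × (V → ℝ)}
    (h : Relation.ReflTransGen OneStepCollapse P Q)
    {b : V} (hbP : b ∈ P.1.verts) (hbQ : b ∉ Q.1.verts) :
    ∃ P' Q' u w, Relation.ReflTransGen OneStepCollapse P P' ∧
      P'.1.Edge u b ∧ P'.1.Edge b w ∧ P'.1.Edge u w ∧
      Q'.1.Edge u w ∧ Relation.ReflTransGen OneStepCollapse Q' Q := by
  induction h using Relation.ReflTransGen.head_induction_on with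
  | refl => exact absurd hbP hbQ
  | @head P M hs ht ih =>
    by_cases hbM : b ∈ M.1.verts
    · obtain ⟨P', Q', u, w, h1, h2, h3, h4, h5, h6⟩ := ih hbM
      exact ⟨P', Q', u, w, Relation.ReflTransGen.head hs h1, h2, h3, h4, h5, h6⟩
    · obtain ⟨u, v, w, hf0, huv, hvw, hu1, hw1, huw, hverts, hedge, hfq⟩ := hs
      have hbv : b = v := by
        by_contra hne
        exact hbM (by rw [hverts]; exact ⟨hbP, hne⟩)
      subst hbv
      have hQuw : M.1.Edge u w := by
        refine (hedge u w).2 ⟨huw, ?_, ?_⟩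
        · rintro ⟨-, rfl⟩; exact P.1.edge_ne _ _ hvw rfl
        · rintro ⟨rfl, -⟩; exact P.1.edge_ne _ _ huv rfl
      exact ⟨P, M, u, w, Relation.ReflTransGen.refl, huv, hvw, huw, hQuw, ht⟩

/-- Let `f` be a discrete Morse function on `G` whose zero-points all
have out-degree and in-degree 1, and let `(G̃, f)` be the full `M`-collapse of `(G, f)`.
Let `r : G → G̃` be the retraction sending each collapsed zero-point `v` to its unique
out-neighbor `w` and fixing all other vertices. Then `r` is a deformation retraction:
`r` is a digraph map with `r|_{G̃} = id`, and `i ∘ r` is homotopic to `id_G`, where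
`i : G̃ → G` is the inclusion. -/
theorem collapse_deformation_retraction (G Gt : DiGraph V) (f : V → ℝ)
    (hf : IsMorse G f)
    (hdeg : ∀ v ∈ G.verts, f v = 0 → (∃! u, G.Edge u v) ∧ (∃! w, G.Edge v w))
    (hcol : FullCollapse (G, f) (Gt, f))
    (r : V → V)
    (hr_fix : ∀ v ∈ Gt.verts, r v = v)
    (hr_move : ∀ v ∈ G.verts, v ∉ Gt.verts → f v = 0 ∧ G.Edge v (r v)) :
    IsDMap G Gt r ∧ Homotopic G G r id := by
  obtain ⟨hchain, -⟩ := hcol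
  obtain ⟨hvsub, hesub, -⟩ := rtg_sub hchain
  have hmem : ∀ v ∈ G.verts, r v ∈ Gt.verts := by
    intro v hv
    by_cases hvt : v ∈ Gt.verts
    · rw [hr_fix v hvt]; exact hvt
    · obtain ⟨hf0, he⟩ := hr_move v hv hvt
      by_contra hrt
      have hrG : r v ∈ G.verts := G.edge_mem_right _ _ he
      exact no_zero_edge hf he hf0 (hr_move _ hrG hrt).1
  have hmap : IsDMap G Gt r := by
    refine ⟨hmem, ?_⟩
    intro a b hab
    have haG := G.edge_mem_left a b hab
    have hbG := G.edge_mem_right a b hab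
    by_cases hbt : b ∈ Gt.verts
    · by_cases hat : a ∈ Gt.verts
      · right
        rw [hr_fix a hat, hr_fix b hbt]
        exact rtg_edge_survive hchain hat hbt hab
      · left
        obtain ⟨hfa, hea⟩ := hr_move a haG hat
        obtain ⟨w, -, huniq⟩ := (hdeg a haG hfa).2
        rw [huniq _ hea, hr_fix b hbt, huniq _ hab]
    · by_cases hat : a ∈ Gt.verts
      · right
        obtain ⟨hfb, heb⟩ := hr_move b hbG hbt
        obtain ⟨P', Q', u, w, hPP', heu, hew, huw, hQuw, hQQ⟩ :=
          find_step hchain hbG hbt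
        have hsubP' := (rtg_sub hPP').2.1
        have hGu : G.Edge u b := hsubP' _ _ heu
        have hGw : G.Edge b w := hsubP' _ _ hew
        have hua : u = a := by
          obtain ⟨u0, -, huq⟩ := (hdeg b hbG hfb).1
          rw [huq _ hGu, huq _ hab]
        have hwr : w = r b := by
          obtain ⟨w0, -, hwq⟩ := (hdeg b hbG hfb).2
          rw [hwq _ hGw, hwq _ heb]
        have hwt : r b ∈ Gt.verts := hmem b hbG
        rw [hr_fix a hat, ← hua, ← hwr]
        rw [← hua] at hat
        rw [← hwr] at hwt
        exact rtg_edge_survive hQQ hat hwt hQuw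
      · exact absurd hab (fun h =>
          no_zero_edge hf h (hr_move a haG hat).1 (hr_move b hbG hbt).1)
  refine ⟨hmap, ?_⟩
  have hrG : IsDMap G G r :=
    ⟨fun v hv => hvsub (hmem v hv),
     fun u v h => (hmap.2 u v h).imp id (hesub _ _)⟩
  have hid : IsDMap G G id := ⟨fun v hv => hv, fun u v h => Or.inr h⟩
  refine Relation.ReflTransGen.single (Or.inr ⟨hid, hrG, ?_⟩)
  intro v hv
  by_cases hvt : v ∈ Gt.verts
  · exact Or.inl (hr_fix v hvt).symm
  · exact Or.inr (hr_move v hv hvt).2
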